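/- For nonzero vectors x_1,...,x_l, y_1,...,y_l in R^d, the volume angles satisfy |∠(x̄_1,...,x̄_l) − ∠(ȳ_1,...,ȳ_l)| ≤ 2·Σ_{i=1}^l ∠(x̄_i, ȳ_i), where ∠(x̄_1,...,x̄_l) = ‖x_1 ∧ ... ∧ x_l‖/(‖x_1‖···‖x_l‖). -/

import Mathlib

open scoped RealInnerProductSpace

set_option linter.unusedSectionVars false
set_option maxHeartbeats 1000000
noncomputable section

abbrev Euc (d : ℕ) := EuclideanSpace ℝ (Fin d)

/-- The norm of the wedge product `x 0 ∧ ... ∧ x (l-1)`, computed as the square root of the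
Gram determinant. -/
def wnorm {d : ℕ} {ι : Type*} [Fintype ι] [DecidableEq ι] (x : ι → Euc d) : ℝ :=
  Real.sqrt (Matrix.of fun i j => ⟪x i, x j⟫).det

/-- The volume angle `∠(x̄_1, ..., x̄_l) = ‖x_1 ∧ ... ∧ x_l‖ / (‖x_1‖ ⋯ ‖x_l‖)`. -/
def angVec {d : ℕ} {ι : Type*} [Fintype ι] [DecidableEq ι] (x : ι → Euc d) : ℝ :=
  wnorm x / ∏ i, ‖x i‖

section aux
variable {d : ℕ} {ι : Type*} [Fintype ι] [DecidableEq ι]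

lemma gram_posSemidef (x : ι → Euc d) :
    (Matrix.of fun i j => ⟪x i, x j⟫ : Matrix ι ι ℝ).PosSemidef := by
  set A : Matrix (Fin d) ι ℝ := Matrix.of fun k i => x i k with hA
  have h : (Matrix.of fun i j => ⟪x i, x j⟫ : Matrix ι ι ℝ) = A.conjTranspose * A := by
    ext i j
    simp [hA, Matrix.mul_apply, Matrix.conjTranspose_apply, PiLp.inner_apply, RCLike.inner_apply,
      mul_comm]
  rw [h]
  exact Matrix.posSemidef_conjTranspose_mul_self _

lemma gram_det_nonneg (x : ι → Euc d) :
    0 ≤ (Matrix.of fun i j => ⟪x i, x j⟫ : Matrix ι ι ℝ).det := by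
  exact (gram_posSemidef x).det_nonneg

lemma wnorm_nonneg (x : ι → Euc d) : 0 ≤ wnorm x := Real.sqrt_nonneg _

lemma wnorm_smul (c : ι → ℝ) (x : ι → Euc d) :
    wnorm (fun i => c i • x i) = (∏ i, |c i|) * wnorm x := by
  have h : (Matrix.of fun i j => ⟪c i • x i, c j • x j⟫ : Matrix ι ι ℝ)
      = Matrix.diagonal c * (Matrix.of fun i j => ⟪x i, x j⟫) * Matrix.diagonal c := by
    ext i j
    simp only [Matrix.mul_diagonal, Matrix.diagonal_mul, Matrix.of_apply,
      real_inner_smul_left, real_inner_smul_right]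
    ring
  rw [wnorm, wnorm, h, Matrix.det_mul, Matrix.det_mul, Matrix.det_diagonal]
  have h2 : (∏ i, c i) * (Matrix.of fun i j => ⟪x i, x j⟫ : Matrix ι ι ℝ).det * (∏ i, c i)
      = (∏ i, c i) ^ 2 * (Matrix.of fun i j => ⟪x i, x j⟫ : Matrix ι ι ℝ).det := by ring
  rw [h2, Real.sqrt_mul (sq_nonneg _), Real.sqrt_sq_eq_abs, Finset.abs_prod]


lemma wnorm_le_one (x : ι → Euc d) (hx : ∀ i, ‖x i‖ = 1) : wnorm x ≤ 1 := by
  set G : Matrix ι ι ℝ := Matrix.of fun i j => ⟪x i, x j⟫ with hG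
  have hpsd := gram_posSemidef x
  have hH : G.IsHermitian := hpsd.isHermitian
  have hnn : ∀ i, 0 ≤ hH.eigenvalues i := hpsd.eigenvalues_nonneg
  have htr : G.trace = Fintype.card ι := by
    rw [Matrix.trace]
    have : ∀ i, G.diag i = 1 := by
      intro i
      simp only [Matrix.diag, hG, Matrix.of_apply]
      rw [real_inner_self_eq_norm_mul_norm, hx i, one_mul]
    calc ∑ i, G.diag i = ∑ _i : ι, (1:ℝ) := Finset.sum_congr rfl fun i _ => this i
      _ = Fintype.card ι := by simp
  have htr2 : G.trace = ∑ i, hH.eigenvalues i := by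
    nth_rewrite 1 [hH.spectral_theorem]
    rw [Unitary.conjStarAlgAut_apply]
    rw [Matrix.trace_mul_cycle]
    rw [show star (hH.eigenvectorUnitary : Matrix ι ι ℝ) * (hH.eigenvectorUnitary : Matrix ι ι ℝ)
        = 1 from (Matrix.mem_unitaryGroup_iff').mp (hH.eigenvectorUnitary).2]
    simp [Matrix.trace_diagonal]
  have hdet : G.det = ∏ i, hH.eigenvalues i := by
    simpa using hH.det_eq_prod_eigenvalues
  have hprod : ∏ i, hH.eigenvalues i ≤ 1 := by
    calc ∏ i, hH.eigenvalues i ≤ ∏ i, Real.exp (hH.eigenvalues i - 1) := by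
          apply Finset.prod_le_prod (fun i _ => hnn i)
          intro i _
          have := Real.add_one_le_exp (hH.eigenvalues i - 1)
          linarith
      _ = Real.exp (∑ i, (hH.eigenvalues i - 1)) := by rw [Real.exp_sum]
      _ ≤ 1 := by
          rw [Finset.sum_sub_distrib]
          simp only [Finset.sum_const, Finset.card_univ, nsmul_eq_mul, mul_one]
          rw [← htr2, htr]
          simp
  have : wnorm x = Real.sqrt G.det := rfl
  rw [this, hdet]
  calc Real.sqrt (∏ i, hH.eigenvalues i) ≤ Real.sqrt 1 := Real.sqrt_le_sqrt hprod
    _ = 1 := Real.sqrt_one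

lemma wnorm_le_prod (x : ι → Euc d) : wnorm x ≤ ∏ i, ‖x i‖ := by
  by_cases hx : ∀ i, x i ≠ 0
  · have h1 : ∀ i, (0:ℝ) < ‖x i‖ := fun i => norm_pos_iff.mpr (hx i)
    have hs := wnorm_smul (fun i => ‖x i‖⁻¹) x
    have hu : wnorm (fun i => ‖x i‖⁻¹ • x i) ≤ 1 :=
      wnorm_le_one _ (fun i => norm_smul_inv_norm (hx i))
    rw [hs] at hu
    have habs : (∏ i, |(‖x i‖⁻¹)|) = (∏ i, ‖x i‖)⁻¹ := by
      rw [← Finset.prod_inv_distrib]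
      exact Finset.prod_congr rfl fun i _ => abs_of_pos (by exact inv_pos.mpr (h1 i))
    rw [habs] at hu
    have hp : (0:ℝ) < ∏ i, ‖x i‖ := Finset.prod_pos fun i _ => h1 i
    calc wnorm x = (∏ i, ‖x i‖) * ((∏ i, ‖x i‖)⁻¹ * wnorm x) := by field_simp
      _ ≤ (∏ i, ‖x i‖) * 1 := by
          apply mul_le_mul_of_nonneg_left hu hp.le
      _ = ∏ i, ‖x i‖ := mul_one _
  · push_neg at hx
    obtain ⟨i0, h0⟩ := hx
    have hdet : (Matrix.of fun i j => ⟪x i, x j⟫ : Matrix ι ι ℝ).det = 0 := by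
      apply Matrix.det_eq_zero_of_row_eq_zero i0
      intro j
      simp [h0]
    rw [wnorm, hdet, Real.sqrt_zero]
    exact Finset.prod_nonneg fun i _ => norm_nonneg _


lemma wnorm_update_abs_sub (x : ι → Euc d) (k : ι) (a b : Euc d) :
    |wnorm (Function.update x k a) - wnorm (Function.update x k b)| ≤
      wnorm (Function.update x k (a - b)) := by
  classical
  set B : Euc d → Euc d → ℝ := fun v w =>
    (Matrix.of fun i j => ⟪Function.update x k v i, Function.update x k w j⟫ : Matrix ι ι ℝ).det
    with hBdef
  have hBvv : ∀ v, wnorm (Function.update x k v) = Real.sqrt (B v v) := fun v => rfl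
  have hnn : ∀ v, 0 ≤ B v v := fun v => gram_det_nonneg _
  have hsym : ∀ v w, B v w = B w v := by
    intro v w
    simp only [hBdef]
    rw [← Matrix.det_transpose]
    congr 1
    ext i j
    simp only [Matrix.transpose_apply, Matrix.of_apply]
    exact real_inner_comm _ _
  have hrow : ∀ v w, (Matrix.of fun i j =>
        ⟪Function.update x k v i, Function.update x k w j⟫ : Matrix ι ι ℝ)
      = Matrix.updateRow (Matrix.of fun i j => ⟪x i, Function.update x k w j⟫) k
          (fun j => ⟪v, Function.update x k w j⟫) := by
    intro v w
    ext i j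
    rcases eq_or_ne i k with rfl | h
    · simp
    · simp [Matrix.updateRow_ne h, Function.update_of_ne h]
  have hadd : ∀ v₁ v₂ w, B (v₁ + v₂) w = B v₁ w + B v₂ w := by
    intro v₁ v₂ w
    simp only [hBdef, hrow]
    have h2 : (fun j => ⟪v₁ + v₂, Function.update x k w j⟫) =
        (fun j => ⟪v₁, Function.update x k w j⟫) + (fun j => ⟪v₂, Function.update x k w j⟫) := by
      funext j; simp [inner_add_left, Finset.sum_add_distrib]
    rw [h2, Matrix.det_updateRow_add]
  have hsmul : ∀ (r : ℝ) v w, B (r • v) w = r * B v w := by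
    intro r v w
    simp only [hBdef, hrow]
    have h2 : (fun j => ⟪r • v, Function.update x k w j⟫) =
        r • (fun j => ⟪v, Function.update x k w j⟫) := by
      funext j; simp only [Pi.smul_apply, smul_eq_mul, real_inner_smul_left]
    rw [h2, Matrix.det_updateRow_smul]
  have haddr : ∀ v w₁ w₂, B v (w₁ + w₂) = B v w₁ + B v w₂ := by
    intro v w₁ w₂
    rw [hsym v (w₁ + w₂), hadd, hsym w₁ v, hsym w₂ v]
  have hsmulr : ∀ (r : ℝ) v w, B v (r • w) = r * B v w := by
    intro r v w
    rw [hsym v (r • w), hsmul, hsym]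
  have hCS : ∀ v w, B v w ^ 2 ≤ B v v * B w w := by
    intro v w
    have h : ∀ t : ℝ, 0 ≤ B w w * (t * t) + (2 * B v w) * t + B v v := by
      intro t
      have h0 := hnn (v + t • w)
      have hexp : B (v + t • w) (v + t • w)
          = B w w * (t * t) + (2 * B v w) * t + B v v := by
        rw [hadd, haddr, haddr, hsmulr, hsmul, hsmul, hsmulr, hsym w v]
        ring
      rw [hexp] at h0
      exact h0
    have hd := discrim_le_zero h
    rw [discrim] at hd
    nlinarith [hd]
  have htri : ∀ v w, Real.sqrt (B (v + w) (v + w)) ≤ Real.sqrt (B v v) + Real.sqrt (B w w) := by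
    intro v w
    have hvw : B v w ≤ Real.sqrt (B v v) * Real.sqrt (B w w) := by
      have h1 : B v w ≤ |B v w| := le_abs_self _
      have h2 : |B v w| = Real.sqrt (B v w ^ 2) := (Real.sqrt_sq_eq_abs _).symm
      have h3 : Real.sqrt (B v w ^ 2) ≤ Real.sqrt (B v v * B w w) := Real.sqrt_le_sqrt (hCS v w)
      rw [Real.sqrt_mul (hnn v)] at h3
      linarith
    have hexp : B (v + w) (v + w) = B v v + 2 * B v w + B w w := by
      rw [hadd, haddr, haddr, hsym w v]; ring
    have e1 := Real.sq_sqrt (hnn v)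
    have e2 := Real.sq_sqrt (hnn w)
    have hle : B (v + w) (v + w) ≤ (Real.sqrt (B v v) + Real.sqrt (B w w)) ^ 2 := by
      nlinarith [hexp, hvw]
    calc Real.sqrt (B (v + w) (v + w))
        ≤ Real.sqrt ((Real.sqrt (B v v) + Real.sqrt (B w w)) ^ 2) := Real.sqrt_le_sqrt hle
      _ = Real.sqrt (B v v) + Real.sqrt (B w w) := Real.sqrt_sq (by positivity)
  have hneg : ∀ v, B (-v) (-v) = B v v := by
    intro v
    have h1 : B (-v) (-v) = -1 * B v (-v) := by
      rw [← hsmul]; norm_num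
    have h2 : B v (-v) = -1 * B v v := by
      rw [← hsmulr]; norm_num
    rw [h1, h2]; ring
  rw [hBvv, hBvv, hBvv, abs_sub_le_iff]
  constructor
  · have h := htri b (a - b)
    rw [show b + (a - b) = a by abel] at h
    linarith
  · have h := htri a (b - a)
    rw [show a + (b - a) = b by abel] at h
    have h2 : Real.sqrt (B (b - a) (b - a)) = Real.sqrt (B (a - b) (a - b)) := by
      rw [show b - a = -(a - b) by abel, hneg]
    linarith

lemma two_dim_bound {u v : Euc d} (hu : ‖u‖ = 1) (hv : ‖v‖ = 1) (hpos : 0 ≤ ⟪u, v⟫) :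
    ‖u - v‖ ≤ 2 * wnorm ![u, v] := by
  set t : ℝ := ⟪u, v⟫ with ht
  have ht1 : t ≤ 1 := by
    have h := real_inner_le_norm u v
    rw [hu, hv] at h
    simpa using h
  have h00 : ⟪u, u⟫ = (1:ℝ) := by rw [real_inner_self_eq_norm_mul_norm, hu]; ring
  have h11 : ⟪v, v⟫ = (1:ℝ) := by rw [real_inner_self_eq_norm_mul_norm, hv]; ring
  have h10 : ⟪v, u⟫ = t := by rw [ht]; exact (real_inner_comm v u).symm
  have hw : wnorm ![u, v] = Real.sqrt (1 - t * t) := by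
    rw [wnorm]
    congr 1
    rw [Matrix.det_fin_two]
    simp only [Matrix.of_apply, Matrix.cons_val', Matrix.cons_val_zero, Matrix.cons_val_one,
      Matrix.head_cons, Matrix.empty_val', Matrix.cons_val_fin_one, Matrix.head_fin_const]
    rw [h00, h11, h10, ← ht]
    ring
  have hns : ‖u - v‖ = Real.sqrt (2 - 2 * t) := by
    have h2 : ‖u - v‖ ^ 2 = 2 - 2 * t := by
      rw [norm_sub_sq_real, hu, hv, ← ht]; ring
    rw [← h2, Real.sqrt_sq (norm_nonneg _)]
  rw [hns, hw]
  have h4 : 2 * Real.sqrt (1 - t * t) = Real.sqrt (4 * (1 - t * t)) := by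
    rw [show (4:ℝ) * (1 - t * t) = 2 ^ 2 * (1 - t * t) by ring,
      Real.sqrt_mul (by positivity), Real.sqrt_sq (by norm_num)]
  rw [h4]
  apply Real.sqrt_le_sqrt
  nlinarith

end aux

theorem stmt1 {d l : ℕ} (x y : Fin l → Euc d) (hx : ∀ i, x i ≠ 0) (hy : ∀ i, y i ≠ 0) :
    |angVec x - angVec y| ≤ 2 * ∑ i, angVec ![x i, y i] := by
  classical
  set u : Fin l → Euc d := fun i => ‖x i‖⁻¹ • x i with hudef
  set s : Fin l → ℝ := fun i => if 0 ≤ ⟪u i, ‖y i‖⁻¹ • y i⟫ then 1 else -1 with hsdef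
  set v : Fin l → Euc d := fun i => (s i * ‖y i‖⁻¹) • y i with hvdef
  have hxn : ∀ i, (0:ℝ) < ‖x i‖ := fun i => norm_pos_iff.mpr (hx i)
  have hyn : ∀ i, (0:ℝ) < ‖y i‖ := fun i => norm_pos_iff.mpr (hy i)
  have hsabs : ∀ i, |s i| = 1 := by
    intro i
    rw [hsdef]
    dsimp only
    split_ifs <;> norm_num
  have hunorm : ∀ i, ‖u i‖ = 1 := fun i => norm_smul_inv_norm (hx i)
  have hvnorm : ∀ i, ‖v i‖ = 1 := by
    intro i
    rw [hvdef]
    dsimp only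
    rw [norm_smul, Real.norm_eq_abs, abs_mul, hsabs i, one_mul, abs_of_pos (inv_pos.mpr (hyn i))]
    exact inv_mul_cancel₀ (hyn i).ne'
  have hpos : ∀ i, 0 ≤ ⟪u i, v i⟫ := by
    intro i
    have hexp : ⟪u i, v i⟫ = s i * ⟪u i, ‖y i‖⁻¹ • y i⟫ := by
      rw [hvdef]
      dsimp only
      rw [real_inner_smul_right, real_inner_smul_right, mul_assoc]
    rw [hexp, hsdef]
    dsimp only
    split_ifs with h
    · simpa using h
    · push_neg at h
      nlinarith [h.le]
  -- angVec x = wnorm u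
  have hax : angVec x = wnorm u := by
    rw [hudef]
    rw [wnorm_smul (fun i => ‖x i‖⁻¹) x, angVec]
    have : (∏ i, |(‖x i‖⁻¹)|) = (∏ i, ‖x i‖)⁻¹ := by
      rw [← Finset.prod_inv_distrib]
      exact Finset.prod_congr rfl fun i _ => abs_of_pos (inv_pos.mpr (hxn i))
    rw [this, div_eq_inv_mul]
  have hay : angVec y = wnorm v := by
    rw [hvdef]
    rw [wnorm_smul (fun i => s i * ‖y i‖⁻¹) y, angVec]
    have : (∏ i, |s i * ‖y i‖⁻¹|) = (∏ i, ‖y i‖)⁻¹ := by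
      rw [← Finset.prod_inv_distrib]
      refine Finset.prod_congr rfl fun i _ => ?_
      rw [abs_mul, hsabs i, one_mul, abs_of_pos (inv_pos.mpr (hyn i))]
    rw [this, div_eq_inv_mul]
  have hai : ∀ i, angVec ![x i, y i] = wnorm ![u i, v i] := by
    intro i
    have hfun : ![u i, v i] = fun j => (![‖x i‖⁻¹, s i * ‖y i‖⁻¹] j) • (![x i, y i] j) := by
      funext j
      fin_cases j <;> simp [hudef, hvdef]
    rw [hfun, wnorm_smul, angVec]
    have h1 : (∏ j, |(![‖x i‖⁻¹, s i * ‖y i‖⁻¹] j)|) = (∏ j, ‖![x i, y i] j‖)⁻¹ := by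
      rw [Fin.prod_univ_two, Fin.prod_univ_two]
      simp only [Matrix.cons_val_zero, Matrix.cons_val_one, Matrix.head_cons]
      rw [abs_mul, hsabs i, one_mul, abs_of_pos (inv_pos.mpr (hxn i)),
        abs_of_pos (inv_pos.mpr (hyn i)), mul_inv]
    rw [h1, div_eq_inv_mul]
  -- telescoping
  set Z : ℕ → Fin l → Euc d := fun k j => if (j : ℕ) < k then v j else u j with hZdef
  have hZ0 : Z 0 = u := by funext j; simp [hZdef]
  have hZl : Z l = v := by funext j; simp [hZdef, j.isLt]
  have key : ∀ k : Fin l,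
      |wnorm (Z ((k : ℕ) + 1)) - wnorm (Z (k : ℕ))| ≤ 2 * wnorm ![u k, v k] := by
    intro k
    have h1 : Z ((k : ℕ) + 1) = Function.update (Z (k : ℕ)) k (v k) := by
      funext j
      rcases eq_or_ne j k with rfl | h
      · simp [hZdef]
      · rw [Function.update_of_ne h, hZdef]
        dsimp only
        have hiff : ((j : ℕ) < (k : ℕ) + 1) ↔ ((j : ℕ) < (k : ℕ)) := by
          constructor
          · intro hh
            rcases Nat.lt_succ_iff_lt_or_eq.mp hh with h' | h'
            · exact h'
            · exact absurd (Fin.ext h') h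
          · exact fun hh => Nat.lt_succ_of_lt hh
        simp [hiff]
    have h2 : Z (k : ℕ) = Function.update (Z (k : ℕ)) k (u k) := by
      funext j
      rcases eq_or_ne j k with rfl | h
      · simp [hZdef]
      · rw [Function.update_of_ne h]
    have h3 := wnorm_update_abs_sub (Z (k : ℕ)) k (v k) (u k)
    rw [← h1, ← h2] at h3
    have h4 : wnorm (Function.update (Z (k : ℕ)) k (v k - u k)) ≤ ‖v k - u k‖ := by
      refine (wnorm_le_prod _).trans ?_
      rw [Finset.prod_eq_single_of_mem k (Finset.mem_univ k) ?side, Function.update_self]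
      case side =>
        intro j _ hj
        rw [Function.update_of_ne hj, hZdef]
        dsimp only
        split_ifs
        exacts [hvnorm j, hunorm j]
    have h5 : ‖v k - u k‖ ≤ 2 * wnorm ![u k, v k] := by
      rw [norm_sub_rev]
      exact two_dim_bound (hunorm k) (hvnorm k) (hpos k)
    exact h3.trans (h4.trans h5)
  have tele : |wnorm (Z l) - wnorm (Z 0)| ≤
      ∑ k : Fin l, |wnorm (Z ((k : ℕ) + 1)) - wnorm (Z (k : ℕ))| := by
    have hsum : ∑ k ∈ Finset.range l, (wnorm (Z (k + 1)) - wnorm (Z k))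
        = wnorm (Z l) - wnorm (Z 0) := Finset.sum_range_sub (fun k => wnorm (Z k)) l
    rw [← hsum]
    refine (Finset.abs_sum_le_sum_abs _ _).trans ?_
    rw [← Fin.sum_univ_eq_sum_range (fun k => |wnorm (Z (k + 1)) - wnorm (Z k)|) l]
  calc |angVec x - angVec y| = |wnorm (Z l) - wnorm (Z 0)| := by
        rw [hZ0, hZl, hax, hay, abs_sub_comm]
    _ ≤ ∑ k : Fin l, |wnorm (Z ((k : ℕ) + 1)) - wnorm (Z (k : ℕ))| := tele
    _ ≤ ∑ k : Fin l, 2 * wnorm ![u k, v k] := Finset.sum_le_sum fun k _ => key k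
    _ = 2 * ∑ i, angVec ![x i, y i] := by
        rw [Finset.mul_sum]
        exact Finset.sum_congr rfl fun i _ => by rw [hai i]
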